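/- ∫_0^∞ (1/(e^x − 1) − 1/(x e^x)) dx = γ, where γ is the Euler–Mascheroni constant. -/

import Mathlib

open MeasureTheory Set Filter Topology Real

namespace EulerIntegralAux

noncomputable def ff (x : ℝ) : ℝ := 1 / (Real.exp x - 1) - 1 / (x * Real.exp x)
noncomputable def hh (x : ℝ) : ℝ := 1 / x - 1 / (Real.exp x - 1)

lemma exp_sub_one_pos {x : ℝ} (hx : 0 < x) : 0 < Real.exp x - 1 := by
  nlinarith [Real.add_one_lt_exp hx.ne']

lemma hh_nonneg {x : ℝ} (hx : 0 < x) : 0 ≤ hh x := by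
  have h1 : x < Real.exp x - 1 := by nlinarith [Real.add_one_lt_exp hx.ne']
  have := one_div_le_one_div_of_le hx h1.le
  simpa [hh, sub_nonneg] using this

lemma exp_mul_exp_neg (x : ℝ) : Real.exp (-x) * Real.exp x = 1 := by
  rw [← Real.exp_add]; simp

lemma hh_le_one {x : ℝ} (hx : 0 < x) : hh x ≤ 1 := by
  have h1 : x < Real.exp x - 1 := by nlinarith [Real.add_one_lt_exp hx.ne']
  have h2 : 1 - x ≤ Real.exp (-x) := by nlinarith [Real.add_one_le_exp (-x)]
  have hE : 0 < Real.exp x := Real.exp_pos x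
  have hE1 : 0 < Real.exp x - 1 := by linarith
  have key : (1 - x) * Real.exp x ≤ 1 := by
    nlinarith [mul_le_mul_of_nonneg_right h2 hE.le, exp_mul_exp_neg x]
  rw [hh, div_sub_div _ _ hx.ne' hE1.ne', div_le_one (by positivity)]
  nlinarith

lemma hh_meas : Measurable hh := by unfold hh; fun_prop

lemma ff_eq {x : ℝ} (hx : 0 < x) : ff x = Real.exp (-x) * (1 - hh x) := by
  have hE : 0 < Real.exp x := Real.exp_pos x
  have hE1 : 0 < Real.exp x - 1 := exp_sub_one_pos hx
  rw [ff, hh, Real.exp_neg]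
  field_simp
  ring

lemma ff_nonneg {x : ℝ} (hx : 0 < x) : 0 ≤ ff x := by
  rw [ff_eq hx]
  have := hh_le_one hx
  have h0 := Real.exp_pos (-x); nlinarith

lemma ff_le {x : ℝ} (hx : 0 < x) : ff x ≤ Real.exp (-x) := by
  rw [ff_eq hx]
  have := hh_nonneg hx
  have h0 := Real.exp_pos (-x)
  nlinarith

lemma ff_meas : Measurable ff := by
  unfold ff; fun_prop

lemma ff_integrable : IntegrableOn ff (Ioi (0:ℝ)) := by
  refine Integrable.mono' (g := fun x => Real.exp (-x)) ?_ ff_meas.aestronglyMeasurable ?_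
  · exact (by simpa using exp_neg_integrableOn_Ioi 0 one_pos : IntegrableOn (fun x => Real.exp (-x)) (Ioi 0))
  · filter_upwards [ae_restrict_mem measurableSet_Ioi] with x hx
    rw [Real.norm_eq_abs, abs_of_nonneg (ff_nonneg hx)]; exact ff_le hx

lemma integral_exp_neg_mul {c : ℝ} (hc : 0 < c) :
    ∫ x in Ioi (0:ℝ), Real.exp (-(c * x)) = 1 / c := by
  have := MeasureTheory.integral_comp_mul_left_Ioi (fun y => Real.exp (-y)) 0 hc
  simp only [mul_zero] at this
  rw [this, integral_exp_neg_Ioi_zero, smul_eq_mul, mul_one, one_div]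

lemma integrable_exp_neg_mul {c : ℝ} (hc : 0 < c) (a : ℝ) :
    IntegrableOn (fun x => Real.exp (-(c * x))) (Ioi a) := by
  simpa [neg_mul] using exp_neg_integrableOn_Ioi a hc

lemma key_identity {x : ℝ} (hx : 0 < x) (n : ℕ) :
    ff x = (∑ k ∈ Finset.range n, Real.exp (-((k+1) * x)))
      - (Real.exp (-x) - Real.exp (-(n * x))) / x
      - Real.exp (-(n * x)) * hh x := by
  have hE : 0 < Real.exp x := Real.exp_pos x
  have hE1 : 0 < Real.exp x - 1 := by nlinarith [Real.add_one_lt_exp hx.ne']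
  have hu1 : Real.exp (-x) < 1 := by
    rw [Real.exp_lt_one_iff]; linarith
  have hu0 : 0 < Real.exp (-x) := Real.exp_pos _
  have hk : ∀ k : ℕ, Real.exp (-((k:ℝ) * x)) = Real.exp (-x) ^ k := by
    intro k
    rw [← Real.exp_nat_mul]; ring_nf
  have hsum : ∑ k ∈ Finset.range n, Real.exp (-(((k:ℝ)+1) * x))
      = Real.exp (-x) * ((Real.exp (-x) ^ n - 1) / (Real.exp (-x) - 1)) := by
    rw [← geom_sum_eq hu1.ne, Finset.mul_sum]
    refine Finset.sum_congr rfl fun k _ => ?_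
    rw [show (-(((k:ℝ)+1) * x)) = -x + -((k:ℝ)*x) by ring, Real.exp_add, hk]
  have hEx : Real.exp x = (Real.exp (-x))⁻¹ := by rw [Real.exp_neg, inv_inv]
  rw [ff, hh, hsum, hk n, hEx]
  set u := Real.exp (-x) with hu
  have h1 : u - 1 ≠ 0 := by linarith [hu1]
  have h1' : (1:ℝ) - u ≠ 0 := by linarith [hu1]
  have h2 : u⁻¹ - 1 ≠ 0 := by
    have : 1 < u⁻¹ := (one_lt_inv₀ hu0).mpr hu1
    linarith
  set v := u ^ n with hv
  field_simp
  ring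

lemma integrableOn_exp_neg_mul_div {c ε : ℝ} (hc : 0 < c) (hε : 0 < ε) :
    IntegrableOn (fun x => Real.exp (-(c * x)) / x) (Ioi ε) := by
  refine Integrable.mono' (g := fun x => ε⁻¹ * Real.exp (-(c * x))) ?_ ?_ ?_
  · have : IntegrableOn (fun x => Real.exp (-(c * x))) (Ioi ε) := by
      simpa [neg_mul] using exp_neg_integrableOn_Ioi ε hc
    exact this.const_mul _
  · apply Measurable.aestronglyMeasurable; fun_prop
  · filter_upwards [ae_restrict_mem measurableSet_Ioi] with x hx
    have hx0 : 0 < x := hε.trans hx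
    rw [Real.norm_eq_abs, abs_of_nonneg (by positivity)]
    rw [div_eq_mul_inv, mul_comm]
    have : x⁻¹ ≤ ε⁻¹ := inv_anti₀ hε hx.le
    have h0 : 0 ≤ Real.exp (-(c*x)) := (Real.exp_pos _).le
    nlinarith

lemma integral_shift {c ε : ℝ} (hc : 0 < c) :
    ∫ x in Ioi ε, Real.exp (-(c * x)) / x = ∫ x in Ioi (c * ε), Real.exp (-x) / x := by
  have := MeasureTheory.integral_comp_mul_left_Ioi (fun y => Real.exp (-y) / y) ε hc
  simp only [smul_eq_mul] at this
  have h2 : ∫ x in Ioi ε, Real.exp (-(c * x)) / (c * x)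
      = c⁻¹ * ∫ x in Ioi (c * ε), Real.exp (-x) / x := this
  have h3 : ∫ x in Ioi ε, Real.exp (-(c * x)) / (c * x)
      = c⁻¹ * ∫ x in Ioi ε, Real.exp (-(c * x)) / x := by
    rw [← MeasureTheory.integral_const_mul]
    refine setIntegral_congr_fun measurableSet_Ioi fun x _ => ?_
    field_simp
  rw [h3] at h2
  exact mul_left_cancel₀ (inv_ne_zero hc.ne') h2

lemma integral_Ioi_split {f : ℝ → ℝ} {ε b : ℝ} (hεb : ε ≤ b)
    (hf : IntegrableOn f (Ioi ε)) :
    ∫ x in Ioi ε, f x = (∫ x in Ioc ε b, f x) + ∫ x in Ioi b, f x := by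
  rw [← Set.Ioc_union_Ioi_eq_Ioi hεb]
  exact setIntegral_union (Set.Ioc_disjoint_Ioi le_rfl) measurableSet_Ioi
    (hf.mono_set (by rw [← Set.Ioc_union_Ioi_eq_Ioi hεb]; exact Set.subset_union_left))
    (hf.mono_set (by rw [← Set.Ioc_union_Ioi_eq_Ioi hεb]; exact Set.subset_union_right))

lemma one_div_integrableOn_Ioc {ε b : ℝ} (hε : 0 < ε) :
    IntegrableOn (fun x : ℝ => 1 / x) (Ioc ε b) := by
  apply Measure.integrableOn_of_bounded (M := ε⁻¹) measure_Ioc_lt_top.ne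
  · apply Measurable.aestronglyMeasurable; fun_prop
  · filter_upwards [ae_restrict_mem measurableSet_Ioc] with x hx
    have hx0 : 0 < x := hε.trans hx.1
    rw [Real.norm_eq_abs, abs_of_nonneg (by positivity), one_div]
    exact inv_anti₀ hε hx.1.le

lemma exp_div_integrableOn_Ioc {ε b : ℝ} (hε : 0 < ε) :
    IntegrableOn (fun x : ℝ => Real.exp (-x) / x) (Ioc ε b) := by
  apply Measure.integrableOn_of_bounded (M := ε⁻¹) measure_Ioc_lt_top.ne
  · apply Measurable.aestronglyMeasurable; fun_prop
  · filter_upwards [ae_restrict_mem measurableSet_Ioc] with x hx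
    have hx0 : 0 < x := hε.trans_le hx.1.le
    rw [Real.norm_eq_abs, abs_of_nonneg (by positivity)]
    have h1 : Real.exp (-x) ≤ 1 := Real.exp_le_one_iff.mpr (by linarith)
    have h2 : x⁻¹ ≤ ε⁻¹ := inv_anti₀ hε hx.1.le
    rw [div_eq_mul_inv]
    nlinarith [inv_pos.mpr hx0, (Real.exp_pos (-x)).le]

lemma integral_exp_div_Ioc_near_log {ε b : ℝ} (hε : 0 < ε) (hεb : ε ≤ b) :
    |(∫ x in Ioc ε b, Real.exp (-x) / x) - Real.log (b / ε)| ≤ b - ε := by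
  have hb : 0 < b := hε.trans_le hεb
  have hlog : Real.log (b / ε) = ∫ x in Ioc ε b, 1 / x := by
    rw [← intervalIntegral.integral_of_le hεb, integral_one_div_of_pos hε hb]
  rw [hlog, ← neg_sub, abs_neg, ← integral_sub (one_div_integrableOn_Ioc hε)
    (exp_div_integrableOn_Ioc hε)]
  have := norm_setIntegral_le_of_norm_le_const (μ := volume) (s := Ioc ε b)
    (f := fun x => 1 / x - Real.exp (-x) / x) (C := 1) measure_Ioc_lt_top ?_
  · rw [Real.norm_eq_abs] at this
    refine this.trans ?_
    rw [measureReal_def, Real.volume_Ioc, ENNReal.toReal_ofReal (by linarith), one_mul]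
  · intro x hx
    have hx0 : 0 < x := hε.trans_le hx.1.le
    have h1 : Real.exp (-x) ≤ 1 := Real.exp_le_one_iff.mpr (by linarith)
    have h2 : 1 - x ≤ Real.exp (-x) := by nlinarith [Real.add_one_le_exp (-x)]
    simp only [Real.norm_eq_abs]
    rw [div_sub_div_same, abs_of_nonneg (div_nonneg (by linarith) hx0.le), div_le_one hx0]
    linarith

lemma frullani_nat {n : ℕ} (hn : 1 ≤ n)
    (hF : IntegrableOn (fun x => (Real.exp (-x) - Real.exp (-((n:ℝ) * x))) / x) (Ioi (0:ℝ))) :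
    ∫ x in Ioi (0:ℝ), (Real.exp (-x) - Real.exp (-((n:ℝ) * x))) / x = Real.log n := by
  set F : ℝ → ℝ := fun x => (Real.exp (-x) - Real.exp (-((n:ℝ) * x))) / x with hFdef
  set A := ∫ x in Ioi (0:ℝ), F x with hA
  have hn' : (1:ℝ) ≤ (n:ℝ) := by exact_mod_cast hn
  have hnpos : (0:ℝ) < n := by linarith
  have key : ∀ ε : ℝ, 0 < ε → |A - Real.log n| ≤ 2 * n * ε := by
    intro ε hε
    have hεn : ε ≤ n * ε := by nlinarith
    have i1 : IntegrableOn (fun x => Real.exp (-x) / x) (Ioi ε) := by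
      simpa using integrableOn_exp_neg_mul_div one_pos hε
    have i2 : IntegrableOn (fun x => Real.exp (-((n:ℝ) * x)) / x) (Ioi ε) :=
      integrableOn_exp_neg_mul_div hnpos hε
    have hFε : IntegrableOn F (Ioi ε) := hF.mono_set (Ioi_subset_Ioi hε.le)
    have e1 : ∫ x in Ioi ε, F x
        = (∫ x in Ioi ε, Real.exp (-x) / x) - ∫ x in Ioi ε, Real.exp (-((n:ℝ) * x)) / x := by
      rw [← integral_sub i1 i2]
      exact setIntegral_congr_fun measurableSet_Ioi fun x _ => by
        simp [hFdef, sub_div]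
    have e2 : ∫ x in Ioi ε, Real.exp (-((n:ℝ) * x)) / x
        = ∫ x in Ioi ((n:ℝ) * ε), Real.exp (-x) / x := integral_shift hnpos
    have e3 : ∫ x in Ioi ε, Real.exp (-x) / x
        = (∫ x in Ioc ε ((n:ℝ)*ε), Real.exp (-x) / x)
          + ∫ x in Ioi ((n:ℝ)*ε), Real.exp (-x) / x :=
      integral_Ioi_split hεn i1
    have e4 : ∫ x in Ioi ε, F x = ∫ x in Ioc ε ((n:ℝ)*ε), Real.exp (-x) / x := by
      rw [e1, e2, e3]; ring
    have b1 : |(∫ x in Ioi ε, F x) - Real.log n| ≤ (n:ℝ)*ε - ε := by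
      have := integral_exp_div_Ioc_near_log hε hεn
      rw [mul_div_assoc, div_self hε.ne', mul_one] at this
      rw [e4]; exact this
    have b2 : |∫ x in Ioc (0:ℝ) ε, F x| ≤ (n:ℝ) * ε := by
      have := norm_setIntegral_le_of_norm_le_const (μ := volume) (s := Ioc (0:ℝ) ε)
        (f := F) (C := n) measure_Ioc_lt_top ?_
      · rw [Real.norm_eq_abs] at this
        refine this.trans ?_
        rw [measureReal_def, Real.volume_Ioc, ENNReal.toReal_ofReal (by linarith), sub_zero]
      · intro x hx
        have hx0 : 0 < x := hx.1
        have l1 : Real.exp (-x) ≤ 1 := Real.exp_le_one_iff.mpr (by linarith)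
        have l2 : 1 - (n:ℝ)*x ≤ Real.exp (-((n:ℝ)*x)) := by
          nlinarith [Real.add_one_le_exp (-((n:ℝ)*x))]
        have l3 : Real.exp (-((n:ℝ)*x)) ≤ Real.exp (-x) := by
          apply Real.exp_le_exp.mpr; nlinarith
        rw [Real.norm_eq_abs, hFdef, abs_of_nonneg (div_nonneg (by linarith) hx0.le),
          div_le_iff₀ hx0]
        nlinarith
    have split : A = (∫ x in Ioc (0:ℝ) ε, F x) + ∫ x in Ioi ε, F x :=
      integral_Ioi_split hε.le hF
    calc |A - Real.log n|
        = |(∫ x in Ioc (0:ℝ) ε, F x) + ((∫ x in Ioi ε, F x) - Real.log n)| := by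
          rw [split, add_sub_assoc]
      _ ≤ |∫ x in Ioc (0:ℝ) ε, F x| + |(∫ x in Ioi ε, F x) - Real.log n| := abs_add_le _ _
      _ ≤ (n:ℝ) * ε + ((n:ℝ)*ε - ε) := add_le_add b2 b1
      _ ≤ 2 * n * ε := by linarith
  have hzero : |A - Real.log n| ≤ 0 := by
    by_contra hc
    push_neg at hc
    have h4 := key (|A - Real.log n| / (4*n)) (by positivity)
    rw [show 2 * (n:ℝ) * (|A - Real.log n| / (4*n)) = |A - Real.log n| / 2 by
      field_simp; ring] at h4
    linarith
  have h5 := abs_nonneg (A - Real.log n)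
  have h6 : A - Real.log n = 0 := by
    rw [← abs_eq_zero]; linarith
  linarith

/-- Value of the integral for a fixed `n ≥ 1`. -/
lemma integral_ff_eq (n : ℕ) (hn : 1 ≤ n) :
    ∫ x in Ioi (0:ℝ), ff x
      = (harmonic n : ℝ) - Real.log n
        - ∫ x in Ioi (0:ℝ), Real.exp (-((n:ℝ) * x)) * hh x := by
  have hn' : (1:ℝ) ≤ (n:ℝ) := by exact_mod_cast hn
  have hnpos : (0:ℝ) < n := by linarith
  set S : ℝ → ℝ := fun x => ∑ k ∈ Finset.range n, Real.exp (-(((k:ℝ)+1) * x)) with hSdef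
  set G : ℝ → ℝ := fun x => Real.exp (-((n:ℝ) * x)) * hh x with hGdef
  set F : ℝ → ℝ := fun x => (Real.exp (-x) - Real.exp (-((n:ℝ) * x))) / x with hFdef
  have hS : IntegrableOn S (Ioi (0:ℝ)) := by
    apply integrable_finset_sum
    intro k _
    exact integrable_exp_neg_mul (by positivity) 0
  have hG : IntegrableOn G (Ioi (0:ℝ)) := by
    refine Integrable.mono' (g := fun x => Real.exp (-((n:ℝ) * x)))
      (integrable_exp_neg_mul hnpos 0) ?_ ?_
    · exact (((measurable_const.mul measurable_id).neg.exp).mul hh_meas).aestronglyMeasurable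
    · filter_upwards [ae_restrict_mem measurableSet_Ioi] with x hx
      rw [Real.norm_eq_abs, abs_of_nonneg (mul_nonneg (Real.exp_pos _).le (hh_nonneg hx))]
      nlinarith [hh_le_one hx, hh_nonneg hx, Real.exp_pos (-((n:ℝ)*x))]
  have hid : EqOn (fun x => S x - ff x - G x) F (Ioi (0:ℝ)) := by
    intro x hx
    have := key_identity (x := x) hx n
    simp only [hSdef, hGdef, hFdef]
    rw [this]; ring
  have hSfG : IntegrableOn (fun x => S x - ff x - G x) (Ioi (0:ℝ)) := by
    exact ((hS.sub ff_integrable).sub hG : Integrable _ _)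
  have hF : IntegrableOn F (Ioi (0:ℝ)) :=
    IntegrableOn.congr_fun hSfG hid measurableSet_Ioi
  have hfid : EqOn ff (fun x => S x - F x - G x) (Ioi (0:ℝ)) := by
    intro x hx
    have := hid hx
    simp only at this ⊢
    rw [← this]; ring
  rw [setIntegral_congr_fun measurableSet_Ioi hfid]
  have hSF : IntegrableOn (fun x => S x - F x) (Ioi (0:ℝ)) := by
    exact (hS.sub hF : Integrable _ _)
  rw [MeasureTheory.integral_sub hSF hG, MeasureTheory.integral_sub hS hF]
  rw [frullani_nat hn hF]
  congr 1
  congr 1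
  rw [MeasureTheory.integral_finset_sum]
  · rw [harmonic]
    push_cast
    refine Finset.sum_congr rfl fun k _ => ?_
    rw [integral_exp_neg_mul (by positivity)]
    rw [one_div]
  · intro k _
    exact integrable_exp_neg_mul (by positivity) 0

lemma remainder_bounds (n : ℕ) (hn : 1 ≤ n) :
    0 ≤ (∫ x in Ioi (0:ℝ), Real.exp (-((n:ℝ) * x)) * hh x)
    ∧ (∫ x in Ioi (0:ℝ), Real.exp (-((n:ℝ) * x)) * hh x) ≤ 1 / n := by
  have hn' : (1:ℝ) ≤ (n:ℝ) := by exact_mod_cast hn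
  have hnpos : (0:ℝ) < n := by linarith
  have hG : IntegrableOn (fun x => Real.exp (-((n:ℝ) * x)) * hh x) (Ioi (0:ℝ)) := by
    refine Integrable.mono' (g := fun x => Real.exp (-((n:ℝ) * x)))
      (integrable_exp_neg_mul hnpos 0) ?_ ?_
    · exact (((measurable_const.mul measurable_id).neg.exp).mul hh_meas).aestronglyMeasurable
    · filter_upwards [ae_restrict_mem measurableSet_Ioi] with x hx
      rw [Real.norm_eq_abs, abs_of_nonneg (mul_nonneg (Real.exp_pos _).le (hh_nonneg hx))]
      nlinarith [hh_le_one hx, hh_nonneg hx, Real.exp_pos (-((n:ℝ)*x))]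
  constructor
  · apply setIntegral_nonneg measurableSet_Ioi
    intro x hx
    exact mul_nonneg (Real.exp_pos _).le (hh_nonneg hx)
  · rw [← integral_exp_neg_mul hnpos]
    apply setIntegral_mono_on hG (integrable_exp_neg_mul hnpos 0) measurableSet_Ioi
    intro x hx
    nlinarith [hh_le_one hx, hh_nonneg hx, Real.exp_pos (-((n:ℝ)*x))]

end EulerIntegralAux

open EulerIntegralAux in
theorem integral_one_div_exp_sub_one_sub :
    ∫ x in Set.Ioi (0 : ℝ), (1 / (Real.exp x - 1) - 1 / (x * Real.exp x))
      = Real.eulerMascheroniConstant := by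
  set R : ℕ → ℝ := fun n => ∫ x in Ioi (0:ℝ), Real.exp (-((n:ℝ) * x)) * hh x with hR
  have hRlim : Tendsto R atTop (𝓝 0) := by
    apply tendsto_of_tendsto_of_tendsto_of_le_of_le' tendsto_const_nhds
      tendsto_one_div_atTop_nhds_zero_nat
    · filter_upwards [eventually_ge_atTop 1] with n hn
      exact (remainder_bounds n hn).1
    · filter_upwards [eventually_ge_atTop 1] with n hn
      exact (remainder_bounds n hn).2
  have hseq : Tendsto (fun n : ℕ => (harmonic n : ℝ) - Real.log n - R n) atTop
      (𝓝 Real.eulerMascheroniConstant) := by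
    have := (Real.tendsto_harmonic_sub_log).sub hRlim
    simpa using this
  have hconst : Tendsto (fun _ : ℕ => ∫ x in Ioi (0:ℝ), ff x) atTop
      (𝓝 Real.eulerMascheroniConstant) := by
    apply hseq.congr'
    filter_upwards [eventually_ge_atTop 1] with n hn
    exact (integral_ff_eq n hn).symm
  have := tendsto_nhds_unique hconst tendsto_const_nhds
  exact this.symm ▸ rfl
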